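/- Fix ε > 0, a_ε = (√(1+4ε) − 1)/2, μ_ε(s) = max{s(1−s)+ε, ε}, and let f_ε be the regularized potential. Then there exists a constant c'_ε ≥ 0, depending only on ε, such that f_ε(s) ≥ ((1 + a_ε)/(2ε))·(s − 1/2)² − c'_ε for every s ∈ ℝ. -/

import Mathlib

/-- Auxiliary quadratic inequality. -/
lemma quad_aux_reg (a ε x c : ℝ) (ha : 0 < a) (hε : 0 < ε) (hc : c ^ 2 ≤ 1/4) :
    (1 + a) / (2 * ε) * (x + c) ^ 2 ≤
      (1 + 2 * a) / (2 * ε) * x ^ 2 + ((1 + a) ^ 2 / (4 * a) + (1 + a) / 4) / (2 * ε) := by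
  have h2ε : (0 : ℝ) < 2 * ε := by linarith
  have key : (1 + a) * (x + c) ^ 2 ≤ (1 + 2 * a) * x ^ 2 + ((1 + a) ^ 2 / (4 * a) + (1 + a) / 4) := by
    have h4a : (0 : ℝ) < 4 * a := by linarith
    have h5 : (1 + a) * (2 * x * c) - a * x ^ 2 ≤ (1 + a) ^ 2 / (4 * a) := by
      rw [le_div_iff₀ h4a]
      nlinarith [sq_nonneg (2 * a * x - (1 + a) * (2 * c)),
        mul_le_mul_of_nonneg_left hc (sq_nonneg (1 + a))]
    nlinarith [h5, hc, mul_le_mul_of_nonneg_left hc (by linarith : (0:ℝ) ≤ 1 + a)]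
  calc (1 + a) / (2 * ε) * (x + c) ^ 2 = ((1 + a) * (x + c) ^ 2) / (2 * ε) := by ring
    _ ≤ ((1 + 2 * a) * x ^ 2 + ((1 + a) ^ 2 / (4 * a) + (1 + a) / 4)) / (2 * ε) := by
        exact div_le_div_of_nonneg_right key h2ε.le
    _ = (1 + 2 * a) / (2 * ε) * x ^ 2 + ((1 + a) ^ 2 / (4 * a) + (1 + a) / 4) / (2 * ε) := by
        ring

/-- quadratic lower bound for `f_ε` centered at `1/2`. -/
theorem regularized_potential_quadratic_lower_bound_centered (ε : ℝ) (hε : 0 < ε)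
    (aε : ℝ) (haε : aε = (Real.sqrt (1 + 4 * ε) - 1) / 2)
    (με : ℝ → ℝ) (hμε : ∀ s : ℝ, με s = max (s * (1 - s) + ε) ε)
    (fε : ℝ → ℝ) (hreg : ContDiff ℝ 2 fε)
    (hf'' : ∀ s : ℝ, deriv (deriv fε) s = (1 + 2 * aε) / με s)
    (hf' : deriv fε (1/2) = 0) (hf : fε (1/2) = - Real.log 2) :
    ∃ c' : ℝ, 0 ≤ c' ∧
      ∀ s : ℝ, (1 + aε) / (2 * ε) * (s - 1/2) ^ 2 - c' ≤ fε s := by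
  have ha : 0 < aε := by
    rw [haε]
    have h1 : (1:ℝ) < Real.sqrt (1 + 4 * ε) := by
      nlinarith [Real.sq_sqrt (show (0:ℝ) ≤ 1 + 4 * ε by linarith),
        Real.sqrt_nonneg (1 + 4 * ε)]
    linarith
  have hμpos : ∀ s, 0 < με s := fun s => by
    rw [hμε]; exact lt_of_lt_of_le hε (le_max_right _ _)
  have hμeq : ∀ s : ℝ, s ≤ 0 ∨ 1 ≤ s → με s = ε := by
    intro s hs
    rw [hμε, max_eq_right]
    rcases hs with h | h
    · nlinarith
    · nlinarith
  have hdf : Differentiable ℝ fε := hreg.differentiable (by norm_num)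
  have hdf' : Differentiable ℝ (deriv fε) := by
    have h := (contDiff_succ_iff_deriv.mp
      (show ContDiff ℝ (1 + 1) fε from by exact_mod_cast hreg)).2.2
    exact h.differentiable (by norm_num)
  have hcont' : Continuous (deriv fε) := hdf'.continuous
  have hf''pos : ∀ s, 0 < deriv (deriv fε) s := fun s => by
    rw [hf'']; exact div_pos (by linarith) (hμpos s)
  have hmono : StrictMono (deriv fε) := strictMono_of_deriv_pos hf''pos
  set m : ℝ := (1 + 2 * aε) / ε with hm
  have hmpos : 0 < m := div_pos (by linarith) hε
  -- derivative lower bound on [1, ∞)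
  have hd1 : ∀ s : ℝ, 1 ≤ s → m * (s - 1) ≤ deriv fε s := by
    intro s hs
    have h := (convex_Ici (1:ℝ)).mul_sub_le_image_sub_of_le_deriv
      hcont'.continuousOn (hdf'.differentiableOn)
      (C := m) (fun x hx => by
        rw [hf'', hμeq x (Or.inr (le_of_lt (by simpa [interior_Ici] using hx)))])
      1 (Set.self_mem_Ici) s hs hs
    have h0 : (0:ℝ) ≤ deriv fε 1 := by
      rw [← hf']; exact (hmono.le_iff_le.mpr (show (1:ℝ)/2 ≤ 1 by norm_num))
    linarith
  -- derivative upper bound on (-∞, 0]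
  have hd0 : ∀ s : ℝ, s ≤ 0 → deriv fε s ≤ m * s := by
    intro s hs
    have h := (convex_Iic (0:ℝ)).mul_sub_le_image_sub_of_le_deriv
      hcont'.continuousOn (hdf'.differentiableOn)
      (C := m) (fun x hx => by
        rw [hf'', hμeq x (Or.inl (le_of_lt (by simpa [interior_Iic] using hx)))])
      s hs 0 (Set.self_mem_Iic) hs
    have h0 : deriv fε 0 ≤ 0 := by
      calc deriv fε 0 ≤ deriv fε (1/2) := hmono.le_iff_le.mpr (by norm_num)
        _ = 0 := hf'
    linarith
  -- function lower bound on [1, ∞)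
  have hF1 : ∀ s : ℝ, 1 ≤ s → fε 1 + m / 2 * (s - 1) ^ 2 ≤ fε s := by
    intro s hs
    have hg : ∀ t : ℝ, HasDerivAt (fun t => fε t - m / 2 * (t - 1) ^ 2)
        (deriv fε t - m * (t - 1)) t := by
      intro t
      have h1 := (hdf t).hasDerivAt
      have h2 : HasDerivAt (fun t : ℝ => (t - 1) ^ 2) (2 * (t - 1)) t := by
        simpa using ((hasDerivAt_id t).sub_const 1).fun_pow 2
      have h3 := h2.const_mul (m / 2)
      have h4 : HasDerivAt (fun t : ℝ => m / 2 * (t - 1) ^ 2) (m * (t - 1)) t := by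
        exact h3.congr_deriv (by ring)
      exact h1.sub h4
    have h := (convex_Ici (1:ℝ)).mul_sub_le_image_sub_of_le_deriv
      (f := fun t => fε t - m / 2 * (t - 1) ^ 2)
      (Continuous.continuousOn (by fun_prop))
      (fun x hx => ((hg x).differentiableAt).differentiableWithinAt)
      (C := 0) (fun x hx => by
        rw [(hg x).deriv]
        have hx1 : (1:ℝ) ≤ x := le_of_lt (by simpa [interior_Ici] using hx)
        linarith [hd1 x hx1])
      1 (Set.self_mem_Ici) s hs hs
    simp only [sub_self, ne_eq] at h
    nlinarith [h]
  -- function lower bound on (-∞, 0]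
  have hF0 : ∀ s : ℝ, s ≤ 0 → fε 0 + m / 2 * s ^ 2 ≤ fε s := by
    intro s hs
    have hg : ∀ t : ℝ, HasDerivAt (fun t => fε t - m / 2 * t ^ 2)
        (deriv fε t - m * t) t := by
      intro t
      have h1 := (hdf t).hasDerivAt
      have h2 : HasDerivAt (fun t : ℝ => t ^ 2) (2 * t) t := by
        simpa using (hasDerivAt_id t).fun_pow 2
      have h3 := h2.const_mul (m / 2)
      have h4 : HasDerivAt (fun t : ℝ => m / 2 * t ^ 2) (m * t) t := by
        exact h3.congr_deriv (by ring)
      exact h1.sub h4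
    have h := (convex_Iic (0:ℝ)).image_sub_le_mul_sub_of_deriv_le
      (f := fun t => fε t - m / 2 * t ^ 2)
      (Continuous.continuousOn (by fun_prop))
      (fun x hx => ((hg x).differentiableAt).differentiableWithinAt)
      (C := 0) (fun x hx => by
        rw [(hg x).deriv]
        have hx0 : x ≤ (0:ℝ) := le_of_lt (by simpa [interior_Iic] using hx)
        linarith [hd0 x hx0])
      s hs 0 (Set.self_mem_Iic) hs
    nlinarith [h]
  -- minimum on [0,1]
  obtain ⟨x0, hx0, hmin⟩ := (isCompact_Icc (a := (0:ℝ)) (b := 1)).exists_isMinOn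
    (Set.nonempty_Icc.mpr (by norm_num)) hdf.continuous.continuousOn
  set K : ℝ := ((1 + aε) ^ 2 / (4 * aε) + (1 + aε) / 4) / (2 * ε) with hK
  have hKpos : 0 < K := by
    apply div_pos _ (by linarith)
    have : (0:ℝ) < (1 + aε) ^ 2 / (4 * aε) := div_pos (by nlinarith) (by linarith)
    nlinarith
  have hApos : 0 < (1 + aε) / (2 * ε) := div_pos (by linarith) (by linarith)
  refine ⟨max 0 (max (K - fε 1) (max (K - fε 0) ((1 + aε) / (2 * ε) / 4 - fε x0))),
    le_max_left _ _, ?_⟩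
  intro s
  rcases le_or_gt s 0 with hs | hs
  · -- s ≤ 0
    have h1 := hF0 s hs
    have h2 := quad_aux_reg aε ε s (-(1/2)) ha hε (by norm_num)
    have h3 : (s + -(1/2)) = s - 1/2 := by ring
    rw [h3] at h2
    have h4 : (1 + 2 * aε) / (2 * ε) * s ^ 2 = m / 2 * s ^ 2 := by rw [hm]; ring
    have h5 : K - fε 0 ≤ max 0 (max (K - fε 1) (max (K - fε 0) ((1 + aε) / (2 * ε) / 4 - fε x0))) :=
      le_trans (le_trans (le_max_left _ _) (le_max_right _ _)) (le_max_right _ _)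
    rw [h4, ← hK] at h2
    linarith
  rcases le_or_gt 1 s with hs1 | hs1
  · -- 1 ≤ s
    have h1 := hF1 s hs1
    have h2 := quad_aux_reg aε ε (s - 1) (1/2) ha hε (by norm_num)
    have h3 : (s - 1 + 1/2) = s - 1/2 := by ring
    rw [h3] at h2
    have h4 : (1 + 2 * aε) / (2 * ε) * (s - 1) ^ 2 = m / 2 * (s - 1) ^ 2 := by rw [hm]; ring
    have h5 : K - fε 1 ≤ max 0 (max (K - fε 1) (max (K - fε 0) ((1 + aε) / (2 * ε) / 4 - fε x0))) :=
      le_trans (le_max_left _ _) (le_max_right _ _)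
    rw [h4, ← hK] at h2
    linarith
  · -- 0 < s < 1
    have hmem : s ∈ Set.Icc (0:ℝ) 1 := ⟨le_of_lt hs, le_of_lt hs1⟩
    have h1 : fε x0 ≤ fε s := hmin hmem
    have h2 : (s - 1/2) ^ 2 ≤ 1/4 := by nlinarith [hmem.1, hmem.2]
    have h3 : (1 + aε) / (2 * ε) * (s - 1/2) ^ 2 ≤ (1 + aε) / (2 * ε) / 4 := by
      calc (1 + aε) / (2 * ε) * (s - 1/2) ^ 2 ≤ (1 + aε) / (2 * ε) * (1/4) :=
            mul_le_mul_of_nonneg_left h2 hApos.le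
        _ = (1 + aε) / (2 * ε) / 4 := by ring
    have h5 : (1 + aε) / (2 * ε) / 4 - fε x0 ≤
        max 0 (max (K - fε 1) (max (K - fε 0) ((1 + aε) / (2 * ε) / 4 - fε x0))) :=
      le_trans (le_trans (le_max_right _ _) (le_max_right _ _)) (le_max_right _ _)
    linarith
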